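/- Let d ≥ 2, n ≥ d+1, and y_1,…,y_n ∈ ℝ^d. Set L := {β ∈ ℝ^n : β_1 y_1 + ⋯ + β_n y_n = 0}. Then the following are equivalent: (A1) for every permutation σ of {1,…,n}, any d of the vectors y_{σ(1)}−y_{σ(2)}, y_{σ(2)}−y_{σ(3)}, …, y_{σ(n−1)}−y_{σ(n)} are linearly independent; (A2) the orthogonal complement L^⊥ has dimension d and is in general position with respect to the reflection arrangement 𝒜(A_{n−1}). -/

import Mathlib

open scoped RealInnerProductSpace BigOperators Pointwise

noncomputable section

/-- The unsigned Stirling numbers of the first kind `⎡n,k⎤`, defined as the coefficients of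
the polynomial identity `t (t+1) ⋯ (t+n-1) = ∑ k, ⎡n,k⎤ t^k`. -/
def stirlingFirst (n k : ℕ) : ℕ :=
  (∏ i ∈ Finset.range n, (Polynomial.X + Polynomial.C i : Polynomial ℕ)).coeff k

/-- The B-analogues `B[n,k]` of the Stirling numbers of the first kind, defined as the
coefficients of `(t+1)(t+3)⋯(t+2n-1) = ∑ k, B[n,k] t^k`. -/
def stirlingFirstB (n k : ℕ) : ℕ :=
  (∏ i ∈ Finset.range n, (Polynomial.X + Polynomial.C (2 * i + 1) : Polynomial ℕ)).coeff k

/-- `D^A(n,d) = 2(⎡n, n-d+1⎤ + ⎡n, n-d+3⎤ + ⋯)`. -/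
def DA (n d : ℕ) : ℕ := 2 * ∑ j ∈ Finset.range d, stirlingFirst n (n - d + 1 + 2 * j)

/-- `D^B(n,d) = 2(B[n, n-d+1] + B[n, n-d+3] + ⋯)`. -/
def DB (n d : ℕ) : ℕ := 2 * ∑ j ∈ Finset.range d, stirlingFirstB n (n - d + 1 + 2 * j)

/-- Stirling numbers of the second kind: the number of partitions of `{1,…,n}` into `k`
non-empty subsets. -/
def stirlingSecond (n k : ℕ) : ℕ :=
  Set.ncard {P : Finset (Finset (Fin n)) |
    P.card = k ∧ (∀ s ∈ P, s.Nonempty) ∧ ∀ i : Fin n, ∃! s, s ∈ P ∧ i ∈ s}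

/-- B-analogues of the Stirling numbers of the second kind:
`S_B(n,k) = ∑_{r=k}^n C(n,r) S(r,k) 2^{r-k}`. -/
def stirlingSecondB (n k : ℕ) : ℕ :=
  ∑ r ∈ Finset.Icc k n, Nat.choose n r * stirlingSecond r k * 2 ^ (r - k)

/-- The `i`-th of the `n-1` difference vectors `y_{σ(i)} - y_{σ(i+1)}` (0-indexed). -/
def diffA (d n : ℕ) (y : Fin n → EuclideanSpace ℝ (Fin d)) (σ : Equiv.Perm (Fin n))
    (i : Fin (n - 1)) : EuclideanSpace ℝ (Fin d) :=
  y (σ ⟨i.val, by have := i.isLt; omega⟩) - y (σ ⟨i.val + 1, by have := i.isLt; omega⟩)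

/-- Condition (A1): `n ≥ d+1` and for every permutation `σ`, any `d` of the vectors
`y_{σ(1)}-y_{σ(2)}, …, y_{σ(n-1)}-y_{σ(n)}` are linearly independent. -/
def CondA1 (d n : ℕ) (y : Fin n → EuclideanSpace ℝ (Fin d)) : Prop :=
  d + 1 ≤ n ∧
    ∀ σ : Equiv.Perm (Fin n), ∀ s : Finset (Fin (n - 1)), s.card = d →
      LinearIndependent ℝ (fun i : s => diffA d n y σ i.1)

/-- A vector of signs `ε ∈ {±1}^n`. -/
def IsSignVec {n : ℕ} (ε : Fin n → ℝ) : Prop := ∀ i, ε i = 1 ∨ ε i = -1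

/-- The `i`-th of the `n` vectors `ε_1 y_{σ(1)} - ε_2 y_{σ(2)}, …,
`ε_{n-1} y_{σ(n-1)} - ε_n y_{σ(n)}, ε_n y_{σ(n)}` (0-indexed). -/
def diffB (d n : ℕ) (y : Fin n → EuclideanSpace ℝ (Fin d)) (ε : Fin n → ℝ)
    (σ : Equiv.Perm (Fin n)) (i : Fin n) : EuclideanSpace ℝ (Fin d) :=
  if h : i.val + 1 < n then
    ε i • y (σ i) - ε ⟨i.val + 1, h⟩ • y (σ ⟨i.val + 1, h⟩)
  else ε i • y (σ i)

/-- Condition (B1): `n ≥ d` and for every sign vector `ε` and permutation `σ`, any `d` of the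
vectors `ε_1 y_{σ(1)}-ε_2 y_{σ(2)}, …, ε_{n-1}y_{σ(n-1)}-ε_n y_{σ(n)}, ε_n y_{σ(n)}` are
linearly independent. -/
def CondB1 (d n : ℕ) (y : Fin n → EuclideanSpace ℝ (Fin d)) : Prop :=
  d ≤ n ∧
    ∀ ε : Fin n → ℝ, IsSignVec ε → ∀ σ : Equiv.Perm (Fin n),
      ∀ s : Finset (Fin n), s.card = d →
        LinearIndependent ℝ (fun i : s => diffB d n y ε σ i.1)

/-- The cone `D^A_σ = {v : ⟨v,y_{σ(1)}⟩ ≤ ⋯ ≤ ⟨v,y_{σ(n)}⟩}`. -/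
def ConeA (d n : ℕ) (y : Fin n → EuclideanSpace ℝ (Fin d)) (σ : Equiv.Perm (Fin n)) :
    Set (EuclideanSpace ℝ (Fin d)) :=
  {v | Monotone fun i : Fin n => (⟪v, y (σ i)⟫)}

/-- The Weyl tessellation of type `A_{n-1}`: all cones `D^A_σ` different from `{0}`. -/
def WeylA (d n : ℕ) (y : Fin n → EuclideanSpace ℝ (Fin d)) :
    Set (Set (EuclideanSpace ℝ (Fin d))) :=
  {C | (∃ σ, C = ConeA d n y σ) ∧ C ≠ {0}}

/-- The cone `D^B_{ε,σ} = {v : ε_1⟨v,y_{σ(1)}⟩ ≤ ⋯ ≤ ε_n⟨v,y_{σ(n)}⟩ ≤ 0}`. -/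
def ConeB (d n : ℕ) (y : Fin n → EuclideanSpace ℝ (Fin d)) (ε : Fin n → ℝ)
    (σ : Equiv.Perm (Fin n)) : Set (EuclideanSpace ℝ (Fin d)) :=
  {v | (Monotone fun i : Fin n => ε i * ⟪v, y (σ i)⟫) ∧
    ∀ i : Fin n, ε i * ⟪v, y (σ i)⟫ ≤ 0}

/-- The Weyl tessellation of type `B_n`: all cones `D^B_{ε,σ}` different from `{0}`. -/
def WeylB (d n : ℕ) (y : Fin n → EuclideanSpace ℝ (Fin d)) :
    Set (Set (EuclideanSpace ℝ (Fin d))) :=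
  {C | (∃ ε σ, IsSignVec ε ∧ C = ConeB d n y ε σ) ∧ C ≠ {0}}

/-- The cone `F^A_σ(l_1,…,l_m)` (with the `l_j` being 1-indexed): within the chain
`⟨v,y_{σ(1)}⟩ ≤ ⋯ ≤ ⟨v,y_{σ(n)}⟩` the inequality at a 1-indexed position `i ∉ {l_1,…,l_m}`
is replaced by an equality. -/
def FaceA (d n : ℕ) (y : Fin n → EuclideanSpace ℝ (Fin d)) (σ : Equiv.Perm (Fin n))
    (m : ℕ) (l : Fin m → ℕ) : Set (EuclideanSpace ℝ (Fin d)) :=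
  {v | (Monotone fun i : Fin n => (⟪v, y (σ i)⟫)) ∧
    ∀ (p : ℕ) (hp : p + 1 < n), (∀ j, l j ≠ p + 1) →
      ⟪v, y (σ ⟨p, by omega⟩)⟫ = ⟪v, y (σ ⟨p + 1, hp⟩)⟫}

/-- Admissible break positions for type `A`: `1 ≤ l_1 < ⋯ < l_m ≤ n-1`. -/
def ValidA (n m : ℕ) (l : Fin m → ℕ) : Prop :=
  StrictMono l ∧ ∀ j, 1 ≤ l j ∧ l j ≤ n - 1

/-- The set `𝓕^A_k(y_1,…,y_n)` of `k`-faces of the Weyl tessellation of type `A_{n-1}`: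
all nonzero cones of the form `F^A_σ(l_1,…,l_{n-d+k-1})`. -/
def FacesA (d n k : ℕ) (y : Fin n → EuclideanSpace ℝ (Fin d)) :
    Set (Set (EuclideanSpace ℝ (Fin d))) :=
  {F | (∃ (σ : Equiv.Perm (Fin n)) (l : Fin (n - d + k - 1) → ℕ),
      ValidA n (n - d + k - 1) l ∧ F = FaceA d n y σ (n - d + k - 1) l) ∧ F ≠ {0}}

/-- The cone `F^B_{ε,σ}(l_1,…,l_m)` (with the `l_j` being 1-indexed): within the chain
`ε_1⟨v,y_{σ(1)}⟩ ≤ ⋯ ≤ ε_n⟨v,y_{σ(n)}⟩ ≤ 0` the inequality at a 1-indexed position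
`i ∉ {l_1,…,l_m}` is replaced by an equality; in particular all `⟨v,y_{σ(i)}⟩` with
`i > l_m` vanish. -/
def FaceB (d n : ℕ) (y : Fin n → EuclideanSpace ℝ (Fin d)) (ε : Fin n → ℝ)
    (σ : Equiv.Perm (Fin n)) (m : ℕ) (l : Fin m → ℕ) : Set (EuclideanSpace ℝ (Fin d)) :=
  {v | (Monotone fun i : Fin n => ε i * ⟪v, y (σ i)⟫) ∧
    (∀ i : Fin n, ε i * ⟪v, y (σ i)⟫ ≤ 0) ∧
    (∀ (p : ℕ) (hp : p + 1 < n), (∀ j, l j ≠ p + 1) →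
      ε ⟨p, by omega⟩ * ⟪v, y (σ ⟨p, by omega⟩)⟫ =
        ε ⟨p + 1, hp⟩ * ⟪v, y (σ ⟨p + 1, hp⟩)⟫) ∧
    (∀ (p : ℕ) (hp : p < n), (∀ j, l j ≤ p) → ⟪v, y (σ ⟨p, hp⟩)⟫ = 0)}

/-- Admissible break positions for type `B`: `1 ≤ l_1 < ⋯ < l_m ≤ n`. -/
def ValidB (n m : ℕ) (l : Fin m → ℕ) : Prop :=
  StrictMono l ∧ ∀ j, 1 ≤ l j ∧ l j ≤ n

/-- The set `𝓕^B_k(y_1,…,y_n)` of `k`-faces of the Weyl tessellation of type `B_n`: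
all nonzero cones of the form `F^B_{ε,σ}(l_1,…,l_{n-d+k})`. -/
def FacesB (d n k : ℕ) (y : Fin n → EuclideanSpace ℝ (Fin d)) :
    Set (Set (EuclideanSpace ℝ (Fin d))) :=
  {F | (∃ (ε : Fin n → ℝ) (σ : Equiv.Perm (Fin n)) (l : Fin (n - d + k) → ℕ),
      IsSignVec ε ∧ ValidB n (n - d + k) l ∧ F = FaceB d n y ε σ (n - d + k) l) ∧ F ≠ {0}}

/-- The multiplicity `l_1!(l_2-l_1)!⋯(l_m-l_{m-1})!(n-l_m)!`. -/
def MultA (n m : ℕ) (l : Fin m → ℕ) : ℕ :=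
  (∏ j : Fin m, Nat.factorial
      (l j - if _ : j.val = 0 then 0 else l ⟨j.val - 1, by have := j.isLt; omega⟩)) *
    (if h : 0 < m then Nat.factorial (n - l ⟨m - 1, by omega⟩) else Nat.factorial n)

/-- The multiplicity `l_1!(l_2-l_1)!⋯(l_m-l_{m-1})!(n-l_m)! 2^{n-l_m}`. -/
def MultB (n m : ℕ) (l : Fin m → ℕ) : ℕ :=
  (∏ j : Fin m, Nat.factorial
      (l j - if _ : j.val = 0 then 0 else l ⟨j.val - 1, by have := j.isLt; omega⟩)) *
    (if h : 0 < m then Nat.factorial (n - l ⟨m - 1, by omega⟩) * 2 ^ (n - l ⟨m - 1, by omega⟩)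
     else Nat.factorial n * 2 ^ n)

/-- The face `C^A_σ(l_1,…,l_m)` of a Weyl chamber of type `A_{n-1}` in `ℝ^n`. -/
def ChamberFaceA (n : ℕ) (σ : Equiv.Perm (Fin n)) (m : ℕ) (l : Fin m → ℕ) :
    Set (EuclideanSpace ℝ (Fin n)) :=
  {β | (Monotone fun i : Fin n => β (σ i)) ∧
    ∀ (p : ℕ) (hp : p + 1 < n), (∀ j, l j ≠ p + 1) → β (σ ⟨p, by omega⟩) = β (σ ⟨p + 1, hp⟩)}

/-- The face `C^B_{ε,σ}(l_1,…,l_m)` of a Weyl chamber of type `B_n` in `ℝ^n`. -/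
def ChamberFaceB (n : ℕ) (ε : Fin n → ℝ) (σ : Equiv.Perm (Fin n)) (m : ℕ) (l : Fin m → ℕ) :
    Set (EuclideanSpace ℝ (Fin n)) :=
  {β | (Monotone fun i : Fin n => ε i * β (σ i)) ∧
    (∀ i : Fin n, ε i * β (σ i) ≤ 0) ∧
    (∀ (p : ℕ) (hp : p + 1 < n), (∀ j, l j ≠ p + 1) →
      ε ⟨p, by omega⟩ * β (σ ⟨p, by omega⟩) = ε ⟨p + 1, hp⟩ * β (σ ⟨p + 1, hp⟩)) ∧
    (∀ (p : ℕ) (hp : p < n), (∀ j, l j ≤ p) → β (σ ⟨p, hp⟩) = 0)}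

/-- The linear subspace `L = {β ∈ ℝ^n : β_1 y_1 + ⋯ + β_n y_n = 0}`. -/
def Lspace (d n : ℕ) (y : Fin n → EuclideanSpace ℝ (Fin d)) :
    Submodule ℝ (EuclideanSpace ℝ (Fin n)) where
  carrier := {β | ∑ i, β i • y i = 0}
  add_mem' := by
    intro a b ha hb
    simp only [Set.mem_setOf_eq] at *
    have h : ∀ i ∈ Finset.univ, (a + b) i • y i = a i • y i + b i • y i := by
      intro i _
      rw [PiLp.add_apply, add_smul]
    rw [Finset.sum_congr rfl h, Finset.sum_add_distrib, ha, hb, add_zero]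
  zero_mem' := by
    simp only [Set.mem_setOf_eq]
    refine Finset.sum_eq_zero fun i _ => ?_
    rw [PiLp.zero_apply, zero_smul]
  smul_mem' := by
    intro c a ha
    simp only [Set.mem_setOf_eq] at *
    have h : ∀ i ∈ Finset.univ, (c • a) i • y i = c • (a i • y i) := by
      intro i _
      rw [PiLp.smul_apply, smul_smul, smul_eq_mul]
    rw [Finset.sum_congr rfl h, ← Finset.smul_sum, ha, smul_zero]

/-- The hyperplane `{β ∈ ℝ^N : β_i = β_j}`. -/
def hypEq (N : ℕ) (i j : Fin N) : Submodule ℝ (EuclideanSpace ℝ (Fin N)) where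
  carrier := {β | β i = β j}
  add_mem' := by
    intro a b ha hb
    simp only [Set.mem_setOf_eq, PiLp.add_apply] at *
    rw [ha, hb]
  zero_mem' := by simp [Set.mem_setOf_eq]
  smul_mem' := by
    intro c a ha
    simp only [Set.mem_setOf_eq, PiLp.smul_apply] at *
    rw [ha]

/-- The hyperplane `{β ∈ ℝ^N : β_i = -β_j}`. -/
def hypOpp (N : ℕ) (i j : Fin N) : Submodule ℝ (EuclideanSpace ℝ (Fin N)) where
  carrier := {β | β i = -β j}
  add_mem' := by
    intro a b ha hb
    simp only [Set.mem_setOf_eq, PiLp.add_apply] at *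
    rw [ha, hb, neg_add]
  zero_mem' := by simp [Set.mem_setOf_eq]
  smul_mem' := by
    intro c a ha
    simp only [Set.mem_setOf_eq, PiLp.smul_apply] at *
    rw [ha, smul_neg]

/-- The hyperplane `{β ∈ ℝ^N : β_i = 0}`. -/
def hypZero (N : ℕ) (i : Fin N) : Submodule ℝ (EuclideanSpace ℝ (Fin N)) where
  carrier := {β | β i = 0}
  add_mem' := by
    intro a b ha hb
    simp only [Set.mem_setOf_eq, PiLp.add_apply] at *
    rw [ha, hb, add_zero]
  zero_mem' := by simp [Set.mem_setOf_eq]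
  smul_mem' := by
    intro c a ha
    simp only [Set.mem_setOf_eq, PiLp.smul_apply] at *
    rw [ha, smul_zero]

/-- The reflection arrangement `𝒜(A_{N-1})` in `ℝ^N`. -/
def ArrA (N : ℕ) : Set (Submodule ℝ (EuclideanSpace ℝ (Fin N))) :=
  {H | ∃ i j : Fin N, i < j ∧ H = hypEq N i j}

/-- The reflection arrangement `𝒜(B_N)` in `ℝ^N`. -/
def ArrB (N : ℕ) : Set (Submodule ℝ (EuclideanSpace ℝ (Fin N))) :=
  {H | (∃ i j : Fin N, i < j ∧ H = hypEq N i j) ∨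
    (∃ i j : Fin N, i < j ∧ H = hypOpp N i j) ∨ ∃ i : Fin N, H = hypZero N i}

/-- Two linear subspaces `U`, `W` of `ℝ^N` are in general position if
`dim (U ∩ W) = max {0, dim U + dim W - N}`. -/
def InGenPos (N : ℕ) (U W : Submodule ℝ (EuclideanSpace ℝ (Fin N))) : Prop :=
  Module.finrank ℝ ↥(U ⊓ W) = Module.finrank ℝ ↥U + Module.finrank ℝ ↥W - N

/-- A linear subspace `U` is in general position with respect to a hyperplane
arrangement `A` if it is in general position with respect to `⋂_{H ∈ B} H` for
every subset `B ⊆ A`. -/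
def InGenPosArr (N : ℕ) (U : Submodule ℝ (EuclideanSpace ℝ (Fin N)))
    (A : Set (Submodule ℝ (EuclideanSpace ℝ (Fin N)))) : Prop :=
  ∀ B ⊆ A, InGenPos N U (sInf B)

/-- The polyhedral cone `{v : ⟨x_1,v⟩ ≤ 0, …, ⟨x_m,v⟩ ≤ 0}`. -/
def PolyCone (d m : ℕ) (x : Fin m → EuclideanSpace ℝ (Fin d)) :
    Set (EuclideanSpace ℝ (Fin d)) :=
  {v | ∀ i, ⟪x i, v⟫ ≤ 0}

/-- The dual cone `C° = {v : ⟨x,v⟩ ≤ 0 ∀ x ∈ C}`. -/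
def DualCone (d : ℕ) (C : Set (EuclideanSpace ℝ (Fin d))) :
    Set (EuclideanSpace ℝ (Fin d)) :=
  {v | ∀ w ∈ C, ⟪w, v⟫ ≤ 0}

/-- The face of `D^B_{ε,σ}` obtained by replacing the inequalities at the (0-indexed)
positions in `E` by equalities. -/
def SubfaceB (d n : ℕ) (y : Fin n → EuclideanSpace ℝ (Fin d)) (ε : Fin n → ℝ)
    (σ : Equiv.Perm (Fin n)) (E : Set (Fin n)) : Set (EuclideanSpace ℝ (Fin d)) :=
  {v | v ∈ ConeB d n y ε σ ∧ ∀ i ∈ E,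
    if h : (i : ℕ) + 1 < n then
      ε i * ⟪v, y (σ i)⟫ = ε ⟨(i : ℕ) + 1, h⟩ * ⟪v, y (σ ⟨(i : ℕ) + 1, h⟩)⟫
    else ε i * ⟪v, y (σ i)⟫ = 0}

end
noncomputable section AuxProof
open Module Finset

namespace CondAProof

variable {d n : ℕ}

lemma mem_orthogonal_span {E : Type*} [NormedAddCommGroup E] [InnerProductSpace ℝ E]
    (X : Set E) (v : E) : v ∈ (Submodule.span ℝ X)ᗮ ↔ ∀ x ∈ X, ⟪x, v⟫ = 0 := by
  constructor
  · intro h x hx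
    exact (Submodule.mem_orthogonal _ v).mp h x (Submodule.subset_span hx)
  · intro h
    rw [Submodule.mem_orthogonal]
    intro u hu
    induction hu using Submodule.span_induction with
    | mem x hx => exact h x hx
    | zero => exact inner_zero_left v
    | add x y hx hy ihx ihy => rw [inner_add_left, ihx, ihy, add_zero]
    | smul a x hx ih => rw [real_inner_smul_left, ih, mul_zero]

/-- The adjoint map `v ↦ (⟪y i, v⟫)_i`. -/
def adjMap (y : Fin n → EuclideanSpace ℝ (Fin d)) :
    EuclideanSpace ℝ (Fin d) →ₗ[ℝ] EuclideanSpace ℝ (Fin n) where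
  toFun v := WithLp.toLp 2 (fun i => ⟪y i, v⟫)
  map_add' u v := PiLp.ext fun i => by simp [inner_add_right]
  map_smul' c v := PiLp.ext fun i => by simp [real_inner_smul_right]

lemma adjMap_apply (y : Fin n → EuclideanSpace ℝ (Fin d)) (v : EuclideanSpace ℝ (Fin d))
    (i : Fin n) : adjMap y v i = ⟪y i, v⟫ := rfl

lemma inner_adjMap (y : Fin n → EuclideanSpace ℝ (Fin d)) (β : EuclideanSpace ℝ (Fin n))
    (v : EuclideanSpace ℝ (Fin d)) :
    ⟪(adjMap y v : EuclideanSpace ℝ (Fin n)), β⟫ = ⟪(∑ i, β i • y i : EuclideanSpace ℝ (Fin d)), v⟫ := by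
  rw [PiLp.inner_apply, sum_inner]
  refine Finset.sum_congr rfl fun i _ => ?_
  rw [real_inner_smul_left, adjMap_apply, RCLike.inner_apply, conj_trivial, mul_comm]

lemma mem_Lspace (y : Fin n → EuclideanSpace ℝ (Fin d)) (β : EuclideanSpace ℝ (Fin n)) :
    β ∈ Lspace d n y ↔ ∑ i, β i • y i = 0 := Iff.rfl

lemma lspace_eq (y : Fin n → EuclideanSpace ℝ (Fin d)) :
    Lspace d n y = (LinearMap.range (adjMap y))ᗮ := by
  ext β
  rw [mem_Lspace, Submodule.mem_orthogonal]
  constructor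
  · rintro hβ u ⟨v, rfl⟩
    rw [inner_adjMap, hβ, inner_zero_left]
  · intro h
    have := h (adjMap y (∑ i, β i • y i)) ⟨_, rfl⟩
    rw [inner_adjMap] at this
    exact inner_self_eq_zero.mp this

lemma lperp_eq (y : Fin n → EuclideanSpace ℝ (Fin d)) :
    (Lspace d n y)ᗮ = LinearMap.range (adjMap y) := by
  rw [lspace_eq]
  exact Submodule.orthogonal_orthogonal _

lemma ker_adjMap (y : Fin n → EuclideanSpace ℝ (Fin d)) :
    LinearMap.ker (adjMap y) = (Submodule.span ℝ (Set.range y))ᗮ := by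
  ext v
  rw [LinearMap.mem_ker, mem_orthogonal_span]
  constructor
  · rintro h x ⟨i, rfl⟩
    exact (adjMap_apply y v i).symm.trans (by rw [h, PiLp.zero_apply])
  · intro h
    refine PiLp.ext fun i => ?_
    exact h (y i) ⟨i, rfl⟩

lemma finrank_range_adjMap (y : Fin n → EuclideanSpace ℝ (Fin d)) :
    finrank ℝ (LinearMap.range (adjMap y)) = finrank ℝ (Submodule.span ℝ (Set.range y)) := by
  have h1 := LinearMap.finrank_range_add_finrank_ker (adjMap y)
  rw [ker_adjMap] at h1
  have h2 := Submodule.finrank_add_finrank_orthogonal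
    (𝕜 := ℝ) (Submodule.span ℝ (Set.range y))
  have h3 : finrank ℝ (EuclideanSpace ℝ (Fin d)) = d := finrank_euclideanSpace_fin
  omega

end CondAProof

namespace CondAProof
open Module Finset
variable {d n : ℕ}

/-- Subspace of vectors constant on the classes of a setoid. -/
def constSub (n : ℕ) (S : Setoid (Fin n)) : Submodule ℝ (EuclideanSpace ℝ (Fin n)) where
  carrier := {β | ∀ a b, S.r a b → β a = β b}
  add_mem' := by
    intro x y hx hy a b h
    simp only [PiLp.add_apply, hx a b h, hy a b h]
  zero_mem' := by intro a b _; rfl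
  smul_mem' := by
    intro c x hx a b h
    simp only [PiLp.smul_apply, hx a b h]

lemma mem_constSub {S : Setoid (Fin n)} {β : EuclideanSpace ℝ (Fin n)} :
    β ∈ constSub n S ↔ ∀ a b, S.r a b → β a = β b := Iff.rfl

/-- `constSub` is linearly equivalent to functions on the quotient. -/
def constSubEquiv (n : ℕ) (S : Setoid (Fin n)) :
    (constSub n S) ≃ₗ[ℝ] (Quotient S → ℝ) where
  toFun β := fun q => (β : EuclideanSpace ℝ (Fin n)) q.out
  map_add' x y := rfl
  map_smul' c x := rfl
  invFun γ := ⟨WithLp.toLp 2 (fun i => γ (Quotient.mk S i)), fun a b h => congrArg γ (Quotient.sound h)⟩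
  left_inv := by
    intro β
    apply Subtype.ext
    refine PiLp.ext fun i => ?_
    exact β.2 _ _ (Quotient.mk_out i)
  right_inv := by
    intro γ
    funext q
    exact congrArg γ (Quotient.out_eq q)

lemma finrank_constSub (S : Setoid (Fin n)) :
    finrank ℝ (constSub n S) = Nat.card (Quotient S) := by
  letI : Fintype (Quotient S) := Fintype.ofFinite _
  rw [(constSubEquiv n S).finrank_eq, Module.finrank_fintype_fun_eq_card,
    Nat.card_eq_fintype_card]

/-- Span of the differences `z a - z b` over related pairs. -/
def spanDiff (S : Setoid (Fin n)) {M : Type} [AddCommGroup M] [Module ℝ M]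
    (z : Fin n → M) : Submodule ℝ M :=
  Submodule.span ℝ {x | ∃ a b, S.r a b ∧ x = z a - z b}

def eBasis (n : ℕ) : Fin n → EuclideanSpace ℝ (Fin n) :=
  fun i => EuclideanSpace.single i (1 : ℝ)

lemma constSub_eq_orthogonal (S : Setoid (Fin n)) :
    constSub n S = (spanDiff S (eBasis n))ᗮ := by
  ext β
  rw [mem_constSub, spanDiff, mem_orthogonal_span]
  constructor
  · rintro h x ⟨a, b, hr, rfl⟩
    rw [inner_sub_left, eBasis, eBasis, EuclideanSpace.inner_single_left,
      EuclideanSpace.inner_single_left, conj_trivial, one_mul, one_mul, h a b hr, sub_self]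
  · intro h a b hr
    have := h _ ⟨a, b, hr, rfl⟩
    rw [inner_sub_left, eBasis, eBasis, EuclideanSpace.inner_single_left,
      EuclideanSpace.inner_single_left, conj_trivial, one_mul, one_mul, sub_eq_zero] at this
    exact this

lemma finrank_spanDiff_basis (S : Setoid (Fin n)) :
    finrank ℝ (spanDiff S (eBasis n)) + Nat.card (Quotient S) = n := by
  have h := Submodule.finrank_add_finrank_orthogonal (𝕜 := ℝ) (spanDiff S (eBasis n))
  rw [← constSub_eq_orthogonal, finrank_constSub] at h
  rw [h]
  exact finrank_euclideanSpace_fin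

end CondAProof

namespace CondAProof
open Module Finset
variable {d n : ℕ}

/-- The prefix-sum linear functionals used to show independence of consecutive
basis differences. -/
def prefixMap (σ : Equiv.Perm (Fin n)) :
    EuclideanSpace ℝ (Fin n) →ₗ[ℝ] (Fin (n - 1) → ℝ) where
  toFun β := fun j => ∑ p ∈ univ.filter (fun p : Fin n => (p : ℕ) ≤ (j : ℕ)), β (σ p)
  map_add' u v := by
    funext j
    simp only [PiLp.add_apply, Finset.sum_add_distrib]
    rfl
  map_smul' c v := by
    funext j
    simp only [PiLp.smul_apply, smul_eq_mul, ← Finset.mul_sum, RingHom.id_apply]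
    rfl

lemma prefixMap_diff (σ : Equiv.Perm (Fin n)) (i : Fin (n - 1)) (h1 : (i : ℕ) < n)
    (h2 : (i : ℕ) + 1 < n) :
    prefixMap σ (eBasis n (σ ⟨(i : ℕ), h1⟩) - eBasis n (σ ⟨(i : ℕ) + 1, h2⟩)) =
      Pi.single i 1 := by
  classical
  funext j
  have key : ∀ (a : Fin n),
      (∑ p ∈ univ.filter (fun p : Fin n => (p : ℕ) ≤ (j : ℕ)), eBasis n (σ a) (σ p)) =
        if (a : ℕ) ≤ (j : ℕ) then 1 else 0 := by
    intro a
    have : ∀ p : Fin n, eBasis n (σ a) (σ p) = if p = a then 1 else 0 := by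
      intro p
      rw [eBasis, EuclideanSpace.single_apply]
      simp [EmbeddingLike.apply_eq_iff_eq]
    rw [Finset.sum_congr rfl fun p _ => this p, Finset.sum_ite_eq' _ a (fun _ => (1:ℝ))]
    simp [Finset.mem_filter]
  have expand : (prefixMap σ (eBasis n (σ ⟨(i : ℕ), h1⟩) - eBasis n (σ ⟨(i : ℕ) + 1, h2⟩))) j =
      (if ((i : ℕ)) ≤ (j : ℕ) then (1:ℝ) else 0) - (if ((i : ℕ) + 1) ≤ (j : ℕ) then 1 else 0) := by
    show (∑ p ∈ univ.filter (fun p : Fin n => (p : ℕ) ≤ (j : ℕ)),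
        (eBasis n (σ ⟨(i : ℕ), h1⟩) - eBasis n (σ ⟨(i : ℕ) + 1, h2⟩)) (σ p)) = _
    simp only [PiLp.sub_apply, Finset.sum_sub_distrib]
    rw [key ⟨(i : ℕ), h1⟩, key ⟨(i : ℕ) + 1, h2⟩]
  rw [expand, Pi.single_apply]
  rcases lt_trichotomy (i : ℕ) (j : ℕ) with h | h | h
  · rw [if_pos h.le, if_pos (by omega : (i:ℕ) + 1 ≤ (j:ℕ)), if_neg (by omega : ¬ j = i), sub_self]
  · rw [if_pos h.le, if_neg (by omega), if_pos (Fin.ext h.symm), sub_zero]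
  · rw [if_neg (by omega), if_neg (by omega), if_neg (by omega : ¬ j = i), sub_self]

lemma indep_basisDiffs (σ : Equiv.Perm (Fin n)) (s : Finset (Fin (n - 1))) :
    LinearIndependent ℝ (fun i : s =>
      (eBasis n (σ ⟨(i : ℕ), by omega⟩) - eBasis n (σ ⟨(i : ℕ) + 1, by omega⟩) :
        EuclideanSpace ℝ (Fin n))) := by
  classical
  apply LinearIndependent.of_comp (prefixMap σ)
  have : (⇑(prefixMap σ) ∘ fun i : s =>
      (eBasis n (σ ⟨(i : ℕ), by omega⟩) - eBasis n (σ ⟨(i : ℕ) + 1, by omega⟩))) =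
      fun i : s => Pi.single (i : Fin (n - 1)) (1 : ℝ) := by
    funext i
    exact prefixMap_diff σ i _ _
  rw [this]
  have h := (Pi.basisFun ℝ (Fin (n - 1))).linearIndependent.comp
    (Subtype.val : s → Fin (n - 1)) Subtype.val_injective
  convert h using 1
  funext i
  rw [Function.comp_apply, Pi.basisFun_apply]

end CondAProof

namespace CondAProof
open Module Finset
variable {d n : ℕ}

/-- A permutation sorting the classes of a setoid into intervals. -/
lemma exists_sorted (S : Setoid (Fin n)) :
    ∃ σ : Equiv.Perm (Fin n),
      ∀ i j k : Fin n, i ≤ j → j ≤ k → S.r (σ i) (σ k) → S.r (σ i) (σ j) := by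
  classical
  set rep : Fin n → Fin n := fun i => (⟦i⟧ : Quotient S).out with hrepdef
  have hrep : ∀ i j, rep i = rep j ↔ S.r i j := by
    intro i j
    constructor
    · intro h
      have h' : (⟦i⟧ : Quotient S) = ⟦j⟧ := Quotient.out_injective h
      exact Quotient.eq.mp h'
    · intro h
      simp only [hrepdef, Quotient.sound h]
  set key : Fin n → Lex (Fin n × Fin n) := fun i => toLex (rep i, i) with hkeydef
  refine ⟨Tuple.sort key, ?_⟩
  have hm := Tuple.monotone_sort key
  set σ := Tuple.sort key
  have hfst : ∀ i j : Fin n, i ≤ j → rep (σ i) ≤ rep (σ j) := by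
    intro i j hij
    have := hm hij
    rw [Function.comp_apply, Function.comp_apply, hkeydef] at this
    rcases (Prod.Lex.le_iff).mp this with h | h
    · exact le_of_lt h
    · exact le_of_eq h.1
  intro i j k hij hjk h
  have h1 := hfst i j hij
  have h2 := hfst j k hjk
  have h3 : rep (σ i) = rep (σ k) := (hrep _ _).mpr h
  exact (hrep _ _).mp (le_antisymm h1 (h3 ▸ h2))

set_option maxHeartbeats 1000000 in
/-- Telescoping: the span of all within-class differences equals the span of the
consecutive differences along a class-sorting permutation. -/
lemma spanDiff_eq_span_consecutive {M : Type} [AddCommGroup M] [Module ℝ M]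
    (S : Setoid (Fin n)) (σ : Equiv.Perm (Fin n))
    (hσ : ∀ i j k : Fin n, i ≤ j → j ≤ k → S.r (σ i) (σ k) → S.r (σ i) (σ j))
    (E : Finset (Fin (n - 1)))
    (hE : ∀ i : Fin (n - 1), i ∈ E ↔
      S.r (σ ⟨(i : ℕ), by omega⟩) (σ ⟨(i : ℕ) + 1, by omega⟩))
    (z : Fin n → M) :
    spanDiff S z = Submodule.span ℝ (Set.range (fun i : E =>
      z (σ ⟨(i : ℕ), by omega⟩) - z (σ ⟨(i : ℕ) + 1, by omega⟩))) := by
  apply le_antisymm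
  · rw [spanDiff, Submodule.span_le]
    rintro x ⟨a, b, hr, rfl⟩
    set p := σ.symm a with hp
    set q := σ.symm b with hq
    have ha : σ p = a := σ.apply_symm_apply a
    have hb : σ q = b := σ.apply_symm_apply b
    have main : ∀ (k : ℕ), ∀ (u : ℕ) (hu : u < n) (huk : u + k < n),
        S.r (σ ⟨u, hu⟩) (σ ⟨u + k, huk⟩) →
        z (σ ⟨u, hu⟩) - z (σ ⟨u + k, huk⟩) ∈ Submodule.span ℝ (Set.range (fun i : E =>
          z (σ ⟨(i : ℕ), by omega⟩) - z (σ ⟨(i : ℕ) + 1, by omega⟩))) := by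
      intro k
      induction k with
      | zero =>
        intro u hu huk _
        have he : (⟨u + 0, huk⟩ : Fin n) = ⟨u, hu⟩ := Fin.ext (show u + 0 = u by omega)
        rw [he, sub_self]
        exact Submodule.zero_mem _
      | succ k ih =>
        intro u hu huk hrel
        have huk' : u + k < n := by omega
        have hr1 : S.r (σ ⟨u, hu⟩) (σ ⟨u + k, huk'⟩) := by
          refine hσ ⟨u, hu⟩ ⟨u + k, huk'⟩ ⟨u + k + 1, by omega⟩ ?_ ?_ ?_
          · exact Fin.mk_le_mk.mpr (by omega)
          · exact Fin.mk_le_mk.mpr (by omega)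
          · exact hrel
        have hr2 : S.r (σ ⟨u + k, huk'⟩) (σ ⟨u + k + 1, by omega⟩) :=
          S.trans (S.symm hr1) hrel
        have hkE : (⟨u + k, by omega⟩ : Fin (n - 1)) ∈ E := by
          rw [hE]
          exact hr2
        have hgen : z (σ ⟨u + k, huk'⟩) - z (σ ⟨u + k + 1, by omega⟩) ∈
            Submodule.span ℝ (Set.range (fun i : E =>
              z (σ ⟨(i : ℕ), by omega⟩) - z (σ ⟨(i : ℕ) + 1, by omega⟩))) := by
          apply Submodule.subset_span
          exact ⟨⟨⟨u + k, by omega⟩, hkE⟩, rfl⟩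
        have heq : z (σ ⟨u, hu⟩) - z (σ ⟨u + (k + 1), huk⟩) =
            (z (σ ⟨u, hu⟩) - z (σ ⟨u + k, huk'⟩)) +
              (z (σ ⟨u + k, huk'⟩) - z (σ ⟨u + k + 1, by omega⟩)) :=
          (sub_add_sub_cancel _ _ _).symm
        rw [heq]
        exact Submodule.add_mem _ (ih u hu huk' hr1) hgen
    rcases le_total (p : ℕ) (q : ℕ) with hpq | hpq
    · have ha' : σ ⟨(p : ℕ), p.isLt⟩ = a := ha
      have hb' : σ ⟨(p : ℕ) + ((q : ℕ) - (p : ℕ)), by omega⟩ = b := by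
        have he : (⟨(p : ℕ) + ((q : ℕ) - (p : ℕ)), by omega⟩ : Fin n) = q :=
          Fin.ext (show (p : ℕ) + ((q : ℕ) - (p : ℕ)) = (q : ℕ) by omega)
        rw [he]
        exact hb
      have hmem := main ((q : ℕ) - (p : ℕ)) (p : ℕ) p.isLt (by omega)
        (by rw [ha', hb']; exact hr)
      rw [ha', hb'] at hmem
      exact hmem
    · have hb' : σ ⟨(q : ℕ), q.isLt⟩ = b := hb
      have ha' : σ ⟨(q : ℕ) + ((p : ℕ) - (q : ℕ)), by omega⟩ = a := by
        have he : (⟨(q : ℕ) + ((p : ℕ) - (q : ℕ)), by omega⟩ : Fin n) = p :=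
          Fin.ext (show (q : ℕ) + ((p : ℕ) - (q : ℕ)) = (p : ℕ) by omega)
        rw [he]
        exact ha
      have hmem := main ((p : ℕ) - (q : ℕ)) (q : ℕ) q.isLt (by omega)
        (by rw [hb', ha']; exact S.symm hr)
      rw [ha', hb'] at hmem
      have := Submodule.neg_mem _ hmem
      rw [neg_sub] at this
      exact this
  · rw [Submodule.span_le]
    rintro x ⟨i, rfl⟩
    apply Submodule.subset_span
    exact ⟨_, _, (hE i).mp i.2, rfl⟩

end CondAProof

namespace CondAProof
open Module Finset
variable {d n : ℕ}

lemma mem_hypEq {N : ℕ} (i j : Fin N) (β : EuclideanSpace ℝ (Fin N)) :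
    β ∈ hypEq N i j ↔ β i = β j := Iff.rfl

lemma sInf_eq_constSub (B : Set (Submodule ℝ (EuclideanSpace ℝ (Fin n))))
    (hB : B ⊆ ArrA n) :
    sInf B = constSub n (Relation.EqvGen.setoid (fun a b => hypEq n a b ∈ B)) := by
  ext β
  rw [Submodule.mem_sInf, mem_constSub]
  constructor
  · intro h a b hab
    induction hab with
    | rel a b hr => exact h _ hr
    | refl a => rfl
    | symm a b _ ih => exact ih.symm
    | trans a b c _ _ ih1 ih2 => exact ih1.trans ih2
  · intro h H hH
    obtain ⟨i, j, _, rfl⟩ := hB hH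
    exact h i j (Relation.EqvGen.rel _ _ hH)

lemma exists_B (S : Setoid (Fin n)) :
    ∃ B ⊆ ArrA n, sInf B = constSub n S := by
  refine ⟨{H | ∃ i j : Fin n, i < j ∧ S.r i j ∧ H = hypEq n i j}, ?_, ?_⟩
  · rintro H ⟨i, j, hij, _, rfl⟩
    exact ⟨i, j, hij, rfl⟩
  · ext β
    rw [Submodule.mem_sInf, mem_constSub]
    constructor
    · intro h a b hab
      rcases lt_trichotomy a b with hlt | heq | hgt
      · exact h _ ⟨a, b, hlt, hab, rfl⟩
      · rw [heq]
      · exact (h _ ⟨b, a, hgt, S.symm hab, rfl⟩).symm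
    · rintro h H ⟨i, j, _, hr, rfl⟩
      exact h i j hr

lemma adjMap_injective (y : Fin n → EuclideanSpace ℝ (Fin d))
    (hrank : finrank ℝ (LinearMap.range (adjMap y)) = d) :
    Function.Injective (adjMap y) := by
  rw [← LinearMap.ker_eq_bot]
  have h1 := LinearMap.finrank_range_add_finrank_ker (adjMap y)
  have h3 : finrank ℝ (EuclideanSpace ℝ (Fin d)) = d := finrank_euclideanSpace_fin
  rw [hrank, h3] at h1
  exact Submodule.finrank_eq_zero.mp (by omega)

lemma inter_eq_map (y : Fin n → EuclideanSpace ℝ (Fin d)) (S : Setoid (Fin n)) :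
    LinearMap.range (adjMap y) ⊓ constSub n S =
      Submodule.map (adjMap y) (spanDiff S y)ᗮ := by
  ext x
  rw [Submodule.mem_inf, Submodule.mem_map]
  constructor
  · rintro ⟨⟨v, rfl⟩, hconst⟩
    refine ⟨v, ?_, rfl⟩
    rw [spanDiff, mem_orthogonal_span]
    rintro u ⟨a, b, hr, rfl⟩
    rw [inner_sub_left, sub_eq_zero]
    exact hconst a b hr
  · rintro ⟨v, hv, rfl⟩
    refine ⟨⟨v, rfl⟩, ?_⟩
    intro a b hr
    rw [spanDiff, mem_orthogonal_span] at hv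
    have := hv _ ⟨a, b, hr, rfl⟩
    rw [inner_sub_left, sub_eq_zero] at this
    exact this

lemma finrank_inter (y : Fin n → EuclideanSpace ℝ (Fin d)) (S : Setoid (Fin n))
    (hinj : Function.Injective (adjMap y)) :
    finrank ℝ (LinearMap.range (adjMap y) ⊓ constSub n S :
      Submodule ℝ (EuclideanSpace ℝ (Fin n))) + finrank ℝ (spanDiff S y) = d := by
  rw [inter_eq_map]
  rw [← (Submodule.equivMapOfInjective _ hinj ((spanDiff S y)ᗮ)).finrank_eq]
  have h := Submodule.finrank_add_finrank_orthogonal (𝕜 := ℝ) (spanDiff S y)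
  have h3 : finrank ℝ (EuclideanSpace ℝ (Fin d)) = d := finrank_euclideanSpace_fin
  omega

/-- Differences over generated equivalence stay in a submodule containing
the generator differences. -/
lemma eqvGen_diff_mem {M : Type} [AddCommGroup M] [Module ℝ M]
    (r0 : Fin n → Fin n → Prop) (z : Fin n → M) (p : Submodule ℝ M)
    (h : ∀ a b, r0 a b → z a - z b ∈ p) :
    ∀ a b, Relation.EqvGen r0 a b → z a - z b ∈ p := by
  intro a b hab
  induction hab with
  | rel a b hr => exact h a b hr
  | refl a => rw [sub_self]; exact p.zero_mem
  | symm a b _ ih => rw [← neg_sub]; exact p.neg_mem ih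
  | trans a b c _ _ ih1 ih2 =>
    rw [← sub_add_sub_cancel _ (z b) _]
    exact p.add_mem ih1 ih2

lemma spanDiff_eqvGen {M : Type} [AddCommGroup M] [Module ℝ M]
    (r0 : Fin n → Fin n → Prop) (z : Fin n → M) :
    spanDiff (Relation.EqvGen.setoid r0) z =
      Submodule.span ℝ {x | ∃ a b, r0 a b ∧ x = z a - z b} := by
  apply le_antisymm
  · rw [spanDiff, Submodule.span_le]
    rintro x ⟨a, b, hr, rfl⟩
    exact eqvGen_diff_mem r0 z (Submodule.span ℝ {x | ∃ a b, r0 a b ∧ x = z a - z b})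
      (fun a b h => Submodule.subset_span ⟨a, b, h, rfl⟩) a b hr
  · rw [spanDiff]
    apply Submodule.span_mono
    rintro x ⟨a, b, hr, rfl⟩
    exact ⟨a, b, Relation.EqvGen.rel _ _ hr, rfl⟩

end CondAProof

namespace CondAProof
open Module Finset
variable {d n : ℕ}

lemma diffA_eq (y : Fin n → EuclideanSpace ℝ (Fin d)) (σ : Equiv.Perm (Fin n))
    (i : Fin (n - 1)) :
    diffA d n y σ i = y (σ ⟨(i : ℕ), by omega⟩) - y (σ ⟨(i : ℕ) + 1, by omega⟩) := rfl

lemma finrank_perp_of_A1 (y : Fin n → EuclideanSpace ℝ (Fin d)) (hn : d + 1 ≤ n)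
    (hA1 : CondA1 d n y) : finrank ℝ ((Lspace d n y)ᗮ) = d := by
  rw [lperp_eq, finrank_range_adjMap]
  have hcard : d ≤ (univ : Finset (Fin (n - 1))).card := by
    rw [Finset.card_univ, Fintype.card_fin]; omega
  obtain ⟨s, _, hs⟩ := Finset.exists_subset_card_eq hcard
  have hind := hA1.2 1 s hs
  apply le_antisymm
  · have := Submodule.finrank_le (Submodule.span ℝ (Set.range y))
    rwa [finrank_euclideanSpace_fin] at this
  · have h1 : finrank ℝ (Submodule.span ℝ
        (Set.range (fun i : s => diffA d n y 1 i.1))) = d := by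
      rw [finrank_span_eq_card hind, Fintype.card_coe, hs]
    have h2 : finrank ℝ (Submodule.span ℝ
        (Set.range (fun i : s => diffA d n y 1 i.1))) ≤
        finrank ℝ (Submodule.span ℝ (Set.range y)) := by
      apply Submodule.finrank_mono
      rw [Submodule.span_le]
      rintro x ⟨i, rfl⟩
      show diffA d n y 1 i.1 ∈ _
      rw [diffA_eq]
      exact Submodule.sub_mem _ (Submodule.subset_span ⟨_, rfl⟩)
        (Submodule.subset_span ⟨_, rfl⟩)
    omega

lemma finrank_span_diffA (y : Fin n → EuclideanSpace ℝ (Fin d)) (hn : d + 1 ≤ n)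
    (hA1 : CondA1 d n y) (σ : Equiv.Perm (Fin n)) (E : Finset (Fin (n - 1))) :
    finrank ℝ (Submodule.span ℝ (Set.range (fun i : E =>
      y (σ ⟨(i : ℕ), by omega⟩) - y (σ ⟨(i : ℕ) + 1, by omega⟩)))) = min d E.card := by
  have huniv : d ≤ (univ : Finset (Fin (n - 1))).card := by
    rw [Finset.card_univ, Fintype.card_fin]; omega
  rcases le_total E.card d with hle | hle
  · obtain ⟨t, hEt, ht⟩ := Finset.exists_superset_card_eq hle (by
      rw [Fintype.card_fin]; omega)
    have hind := (hA1.2 σ t ht).comp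
      (fun i : E => (⟨i.1, hEt i.2⟩ : t))
      (fun i j hij => by apply Subtype.ext; simpa using hij)
    have hind' : LinearIndependent ℝ (fun i : E =>
        y (σ ⟨(i : ℕ), by omega⟩) - y (σ ⟨(i : ℕ) + 1, by omega⟩)) := hind
    rw [finrank_span_eq_card hind', Fintype.card_coe, min_eq_right hle]
  · obtain ⟨t, htE, ht⟩ := Finset.exists_subset_card_eq hle
    have hind := hA1.2 σ t ht
    rw [min_eq_left hle]
    apply le_antisymm
    · have := Submodule.finrank_le (Submodule.span ℝ (Set.range (fun i : E =>
        y (σ ⟨(i : ℕ), by omega⟩) - y (σ ⟨(i : ℕ) + 1, by omega⟩))))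
      rwa [finrank_euclideanSpace_fin] at this
    · have h1 : finrank ℝ (Submodule.span ℝ
          (Set.range (fun i : t => diffA d n y σ i.1))) = d := by
        rw [finrank_span_eq_card hind, Fintype.card_coe, ht]
      have h2 : finrank ℝ (Submodule.span ℝ
          (Set.range (fun i : t => diffA d n y σ i.1))) ≤
          finrank ℝ (Submodule.span ℝ (Set.range (fun i : E =>
            y (σ ⟨(i : ℕ), by omega⟩) - y (σ ⟨(i : ℕ) + 1, by omega⟩)))) := by
        apply Submodule.finrank_mono
        rw [Submodule.span_le]
        rintro x ⟨i, rfl⟩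
        exact Submodule.subset_span ⟨⟨i.1, htE i.2⟩, rfl⟩
      omega

end CondAProof

end AuxProof

/-- Theorem 2.13: equivalence of the general position assumptions (A1) and (A2). -/
theorem condA1_iff_condA2 (d n : ℕ) (hd : 2 ≤ d) (hn : d + 1 ≤ n)
    (y : Fin n → EuclideanSpace ℝ (Fin d)) :
    CondA1 d n y ↔
      Module.finrank ℝ ↥((Lspace d n y)ᗮ) = d ∧
        InGenPosArr n ((Lspace d n y)ᗮ) (ArrA n) := by
  classical
  constructor
  · intro hA1
    have hrank : Module.finrank ℝ ((Lspace d n y)ᗮ) = d :=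
      CondAProof.finrank_perp_of_A1 y hn hA1
    refine ⟨hrank, ?_⟩
    intro B hB
    unfold InGenPos
    rw [CondAProof.sInf_eq_constSub B hB]
    set S := Relation.EqvGen.setoid (fun a b => hypEq n a b ∈ B) with hS
    rw [hrank, CondAProof.finrank_constSub]
    set c := Nat.card (Quotient S) with hc
    have hinj : Function.Injective (CondAProof.adjMap y) := by
      apply CondAProof.adjMap_injective
      rw [← CondAProof.lperp_eq]; exact hrank
    obtain ⟨σ, hσ⟩ := CondAProof.exists_sorted S
    set E : Finset (Fin (n - 1)) := Finset.univ.filter (fun i : Fin (n - 1) =>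
      S.r (σ ⟨(i : ℕ), by omega⟩) (σ ⟨(i : ℕ) + 1, by omega⟩)) with hEdef
    have hE : ∀ i : Fin (n - 1), i ∈ E ↔
        S.r (σ ⟨(i : ℕ), by omega⟩) (σ ⟨(i : ℕ) + 1, by omega⟩) := by
      intro i
      simp [hEdef]
    have hbasis := CondAProof.spanDiff_eq_span_consecutive S σ hσ E hE (CondAProof.eBasis n)
    have hcard : Module.finrank ℝ (Submodule.span ℝ (Set.range (fun i : E =>
        CondAProof.eBasis n (σ ⟨(i : ℕ), by omega⟩) -
          CondAProof.eBasis n (σ ⟨(i : ℕ) + 1, by omega⟩)))) = E.card := by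
      rw [finrank_span_eq_card (CondAProof.indep_basisDiffs σ E), Fintype.card_coe]
    have hEc : E.card + c = n := by
      have h := CondAProof.finrank_spanDiff_basis S
      rw [hbasis, hcard] at h
      exact h
    have hy := CondAProof.spanDiff_eq_span_consecutive S σ hσ E hE y
    have hyrank : Module.finrank ℝ (CondAProof.spanDiff S y) = min d E.card := by
      rw [hy]
      exact CondAProof.finrank_span_diffA y hn hA1 σ E
    have hint := CondAProof.finrank_inter y S hinj
    rw [CondAProof.lperp_eq]
    rw [hyrank] at hint
    rcases le_total E.card d with h | h
    · rw [min_eq_right h] at hint; omega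
    · rw [min_eq_left h] at hint; omega
  · rintro ⟨hrank, hgen⟩
    refine ⟨hn, ?_⟩
    intro σ s hs
    set r0 : Fin n → Fin n → Prop := fun a b => ∃ p : Fin (n - 1), p ∈ s ∧
      a = σ ⟨(p : ℕ), by omega⟩ ∧ b = σ ⟨(p : ℕ) + 1, by omega⟩ with hr0
    set S := Relation.EqvGen.setoid r0 with hS
    have hinj : Function.Injective (CondAProof.adjMap y) := by
      apply CondAProof.adjMap_injective
      rw [← CondAProof.lperp_eq]; exact hrank
    have hsetB : {x | ∃ a b, r0 a b ∧ x = CondAProof.eBasis n a - CondAProof.eBasis n b} =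
        Set.range (fun p : s => CondAProof.eBasis n (σ ⟨((p : Fin (n - 1)) : ℕ), by omega⟩) -
          CondAProof.eBasis n (σ ⟨((p : Fin (n - 1)) : ℕ) + 1, by omega⟩)) := by
      ext x
      constructor
      · rintro ⟨a, b, ⟨p, hp, rfl, rfl⟩, rfl⟩
        exact ⟨⟨p, hp⟩, rfl⟩
      · rintro ⟨p, rfl⟩
        exact ⟨_, _, ⟨p.1, p.2, rfl, rfl⟩, rfl⟩
    have hsetY : {x | ∃ a b, r0 a b ∧ x = y a - y b} =
        Set.range (fun p : s => y (σ ⟨((p : Fin (n - 1)) : ℕ), by omega⟩) -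
          y (σ ⟨((p : Fin (n - 1)) : ℕ) + 1, by omega⟩)) := by
      ext x
      constructor
      · rintro ⟨a, b, ⟨p, hp, rfl, rfl⟩, rfl⟩
        exact ⟨⟨p, hp⟩, rfl⟩
      · rintro ⟨p, rfl⟩
        exact ⟨_, _, ⟨p.1, p.2, rfl, rfl⟩, rfl⟩
    have hbasis : Module.finrank ℝ (CondAProof.spanDiff S (CondAProof.eBasis n)) = d := by
      rw [hS, CondAProof.spanDiff_eqvGen, hsetB,
        finrank_span_eq_card (CondAProof.indep_basisDiffs σ s), Fintype.card_coe, hs]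
    have hcq : d + Nat.card (Quotient S) = n := by
      have h := CondAProof.finrank_spanDiff_basis S
      rw [hbasis] at h
      exact h
    obtain ⟨B, hB, hsInf⟩ := CondAProof.exists_B S
    have h2 := hgen B hB
    unfold InGenPos at h2
    rw [hsInf, hrank, CondAProof.finrank_constSub, CondAProof.lperp_eq] at h2
    have hint := CondAProof.finrank_inter y S hinj
    have hyrank : Module.finrank ℝ (CondAProof.spanDiff S y) = d := by omega
    rw [linearIndependent_iff_card_eq_finrank_span, Fintype.card_coe, hs]
    have hre : (Set.range fun i : s => diffA d n y σ (i : Fin (n - 1))) =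
        Set.range (fun p : s => y (σ ⟨((p : Fin (n - 1)) : ℕ), by omega⟩) -
          y (σ ⟨((p : Fin (n - 1)) : ℕ) + 1, by omega⟩)) := rfl
    rw [Set.finrank, hre, ← hsetY, ← CondAProof.spanDiff_eqvGen, ← hS, hyrank]
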